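/- Let R_PR and R_GT be axis-aligned rectangles with positive area whose intersection is nonempty, and suppose IoU(R_PR, R_GT) ≥ α for some α ∈ (0,1]. Then the k-expansion of R_PR with k = (2−α)/α contains R_GT. -/

import Mathlib

/-- Axis-aligned rectangle with center `(x, y)`, half-width `w`, half-height `h`. -/
def rect (x y w h : ℝ) : Set (ℝ × ℝ) :=
  {p | |p.1 - x| ≤ w ∧ |p.2 - y| ≤ h}

/-- Area of a planar set, via 2-dimensional Lebesgue measure. -/
noncomputable def area (S : Set (ℝ × ℝ)) : ℝ := (MeasureTheory.volume S).toReal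

/-- Intersection-over-Union of two planar sets. -/
noncomputable def iou (A B : Set (ℝ × ℝ)) : ℝ := area (A ∩ B) / area (A ∪ B)

open MeasureTheory Set

lemma rect_eq (x y w h : ℝ) :
    rect x y w h = Set.Icc (x - w) (x + w) ×ˢ Set.Icc (y - h) (y + h) := by
  ext p
  simp only [rect, Set.mem_setOf_eq, Set.mem_prod, Set.mem_Icc, abs_le]
  constructor
  · rintro ⟨⟨h1, h2⟩, h3, h4⟩
    exact ⟨⟨by linarith, by linarith⟩, by linarith, by linarith⟩
  · rintro ⟨⟨h1, h2⟩, h3, h4⟩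
    exact ⟨⟨by linarith, by linarith⟩, by linarith, by linarith⟩

lemma vol_prod_Icc (a b c d : ℝ) :
    volume (Set.Icc a b ×ˢ Set.Icc c d) = ENNReal.ofReal (b - a) * ENNReal.ofReal (d - c) := by
  rw [MeasureTheory.Measure.volume_eq_prod, MeasureTheory.Measure.prod_prod, Real.volume_Icc,
    Real.volume_Icc]

lemma area_prod_Icc (a b c d : ℝ) (h1 : a ≤ b) (h2 : c ≤ d) :
    area (Set.Icc a b ×ˢ Set.Icc c d) = (b - a) * (d - c) := by
  rw [area, vol_prod_Icc, ENNReal.toReal_mul, ENNReal.toReal_ofReal (by linarith),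
    ENNReal.toReal_ofReal (by linarith)]

set_option maxHeartbeats 1000000 in
/-- If two axis-aligned rectangles of positive area intersect and their IoU is at least
`α ∈ (0,1]`, then the `k`-expansion of the prediction with `k = (2-α)/α` contains the
ground-truth rectangle. -/
theorem expanded_prediction_covers_gt
    (px py pw ph gx gy gw gh α : ℝ)
    (hpw : 0 < pw) (hph : 0 < ph) (hgw : 0 < gw) (hgh : 0 < gh)
    (hα : 0 < α) (hα1 : α ≤ 1)
    (hne : (rect px py pw ph ∩ rect gx gy gw gh).Nonempty)
    (hiou : α ≤ iou (rect px py pw ph) (rect gx gy gw gh)) :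
    rect gx gy gw gh ⊆ rect px py (((2 - α) / α) * pw) (((2 - α) / α) * ph) := by
  set P := rect px py pw ph with hP
  set G := rect gx gy gw gh with hG
  set A := max (px - pw) (gx - gw) with hA
  set B := min (px + pw) (gx + gw) with hB
  set C := max (py - ph) (gy - gh) with hC
  set D := min (py + ph) (gy + gh) with hD
  have hPeq : P = Set.Icc (px - pw) (px + pw) ×ˢ Set.Icc (py - ph) (py + ph) := rect_eq _ _ _ _
  have hGeq : G = Set.Icc (gx - gw) (gx + gw) ×ˢ Set.Icc (gy - gh) (gy + gh) := rect_eq _ _ _ _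
  have hIeq : P ∩ G = Set.Icc A B ×ˢ Set.Icc C D := by
    rw [hPeq, hGeq, Set.prod_inter_prod]
    simp only [Set.Icc_inter_Icc]
    rfl
  have hne' : A ≤ B ∧ C ≤ D := by
    rw [hIeq] at hne
    obtain ⟨h1, h2⟩ := Set.prod_nonempty_iff.mp hne
    exact ⟨Set.nonempty_Icc.mp h1, Set.nonempty_Icc.mp h2⟩
  obtain ⟨hAB, hCD⟩ := hne'
  -- component bounds
  have hA1 : px - pw ≤ A := le_max_left _ _
  have hA2 : gx - gw ≤ A := le_max_right _ _
  have hB1 : B ≤ px + pw := min_le_left _ _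
  have hB2 : B ≤ gx + gw := min_le_right _ _
  have hC1 : py - ph ≤ C := le_max_left _ _
  have hC2 : gy - gh ≤ C := le_max_right _ _
  have hD1 : D ≤ py + ph := min_le_left _ _
  have hD2 : D ≤ gy + gh := min_le_right _ _
  -- areas
  have hAP : area P = 4 * pw * ph := by
    rw [hPeq, area_prod_Icc _ _ _ _ (by linarith) (by linarith)]; ring
  have hAG : area G = 4 * gw * gh := by
    rw [hGeq, area_prod_Icc _ _ _ _ (by linarith) (by linarith)]; ring
  have hAI : area (P ∩ G) = (B - A) * (D - C) := by
    rw [hIeq, area_prod_Icc _ _ _ _ hAB hCD]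
  -- finiteness
  have hfinP : volume P ≠ ⊤ := by
    rw [hPeq, vol_prod_Icc]
    exact ENNReal.mul_ne_top ENNReal.ofReal_ne_top ENNReal.ofReal_ne_top
  have hfinG : volume G ≠ ⊤ := by
    rw [hGeq, vol_prod_Icc]
    exact ENNReal.mul_ne_top ENNReal.ofReal_ne_top ENNReal.ofReal_ne_top
  have hfinU : volume (P ∪ G) ≠ ⊤ :=
    ne_top_of_le_ne_top (ENNReal.add_ne_top.mpr ⟨hfinP, hfinG⟩) (measure_union_le _ _)
  have hfinI : volume (P ∩ G) ≠ ⊤ :=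
    ne_top_of_le_ne_top hfinP (measure_mono Set.inter_subset_left)
  have hGmeas : MeasurableSet G := by
    rw [hGeq]; exact measurableSet_Icc.prod measurableSet_Icc
  have hsum : volume (P ∪ G) + volume (P ∩ G) = volume P + volume G :=
    measure_union_add_inter _ hGmeas
  have hsum' : area (P ∪ G) + area (P ∩ G) = area P + area G := by
    have h := congrArg ENNReal.toReal hsum
    rwa [ENNReal.toReal_add hfinU hfinI, ENNReal.toReal_add hfinP hfinG] at h
  have hUval : area (P ∪ G) = 4 * pw * ph + 4 * gw * gh - (B - A) * (D - C) := by
    rw [hAP, hAG, hAI] at hsum'; linarith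
  have hUpos : 0 < area (P ∪ G) := by
    have h1 : area P ≤ area (P ∪ G) :=
      ENNReal.toReal_mono hfinU (measure_mono Set.subset_union_left)
    rw [hAP] at h1
    nlinarith
  have hαU : α * area (P ∪ G) ≤ area (P ∩ G) := by
    rw [iou] at hiou
    exact (le_div_iff₀ hUpos).mp hiou
  rw [hUval, hAI] at hαU
  -- real analysis on iw = B - A, ih = D - C
  have hiw0 : 0 ≤ B - A := by linarith
  have hih0 : 0 ≤ D - C := by linarith
  have hIle : (B - A) * (D - C) ≤ (2 * pw) * (2 * ph) :=
    mul_le_mul (by linarith) (by linarith) hih0 (by linarith)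
  have hIpos : 0 < (B - A) * (D - C) := by nlinarith
  have hiwpos : 0 < B - A := by
    rcases lt_or_eq_of_le hiw0 with h | h
    · exact h
    · exfalso; nlinarith
  have hihpos : 0 < D - C := by
    rcases lt_or_eq_of_le hih0 with h | h
    · exact h
    · exfalso; nlinarith
  -- key per-axis inequalities
  have hx : 2 * α * pw + 2 * α * gw - α * (B - A) ≤ B - A := by
    have h1 : (2 * α * pw + 2 * α * gw - α * (B - A)) * (D - C) ≤ (B - A) * (D - C) := by
      nlinarith [mul_nonneg (mul_nonneg hα.le (by linarith : (0:ℝ) ≤ 2 * pw))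
          (by linarith : (0:ℝ) ≤ 2 * ph - (D - C)),
        mul_nonneg (mul_nonneg hα.le (by linarith : (0:ℝ) ≤ 2 * gw))
          (by linarith : (0:ℝ) ≤ 2 * gh - (D - C))]
    exact le_of_mul_le_mul_right h1 hihpos
  have hy : 2 * α * ph + 2 * α * gh - α * (D - C) ≤ D - C := by
    have h1 : (2 * α * ph + 2 * α * gh - α * (D - C)) * (B - A) ≤ (D - C) * (B - A) := by
      nlinarith [mul_nonneg (mul_nonneg hα.le (by linarith : (0:ℝ) ≤ 2 * ph))
          (by linarith : (0:ℝ) ≤ 2 * pw - (B - A)),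
        mul_nonneg (mul_nonneg hα.le (by linarith : (0:ℝ) ≤ 2 * gh))
          (by linarith : (0:ℝ) ≤ 2 * gw - (B - A))]
    exact le_of_mul_le_mul_right h1 hiwpos
  have hxfinal : pw + 2 * gw - (B - A) ≤ (2 - α) / α * pw := by
    rw [div_mul_eq_mul_div, le_div_iff₀ hα]
    nlinarith [hx, mul_le_mul_of_nonneg_left (show B - A ≤ 2 * pw by linarith) hα.le]
  have hyfinal : ph + 2 * gh - (D - C) ≤ (2 - α) / α * ph := by
    rw [div_mul_eq_mul_div, le_div_iff₀ hα]
    nlinarith [hy, mul_le_mul_of_nonneg_left (show D - C ≤ 2 * ph by linarith) hα.le]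
  -- conclude
  intro q hq
  obtain ⟨hq1, hq2⟩ := hq
  rw [abs_le] at hq1 hq2
  constructor
  · rw [abs_le]
    constructor <;> linarith
  · rw [abs_le]
    constructor <;> linarith
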